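/- For each k ≥ 2 there exists a computable sequence ⟨fᵢ : ℕ → Fin k : i ∈ ℕ⟩ of colorings such that no Δ⁰₂ sequence ⟨Dᵢ : i ∈ ℕ⟩ with each Dᵢ an infinite thin set for fᵢ exists; equivalently, the sequence has no ∅′-computable solution as an instance of the sequential thin set theorem for k colors. -/

import Mathlib

/-- A (total-style) Turing functional, given by a computable, monotone
approximation function mapping finite oracle prefixes to output values. -/
structure TuringFunctional where
  approx : List ℕ → ℕ → Option ℕ
  computable : Computable₂ approx
  mono : ∀ {l₁ l₂ : List ℕ} {n a : ℕ}, l₁ <+: l₂ → approx l₁ n = some a → approx l₂ n = some a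

/-- `Φ.evalsTo X Y` means the functional `Φ` with oracle `X` converges everywhere
and computes the total function `Y`. -/
def TuringFunctional.evalsTo (Φ : TuringFunctional) (X Y : ℕ → ℕ) : Prop :=
  ∀ n, ∃ m, Φ.approx ((List.range m).map X) n = some (Y n)

/-- Effective join of two oracles. -/
def join2 (X Y : ℕ → ℕ) : ℕ → ℕ := fun n => if n % 2 = 0 then X (n / 2) else Y (n / 2)

/-- Code a boolean-valued function (a set) as an oracle. -/
def bc (X : ℕ → Bool) : ℕ → ℕ := fun n => Bool.toNat (X n)

/-- Effective join of a countable sequence of sets into a single oracle. -/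
def seqJoin (A : ℕ → ℕ → Bool) : ℕ → ℕ := fun n => Bool.toNat (A n.unpair.1 n.unpair.2)

/-- The halting set `∅′`: the set of `e` such that the `e`-th partial computable
function halts on input `e`. -/
def haltingSet : Set ℕ :=
  {e | ∃ s, (Nat.Partrec.Code.evaln s (Denumerable.ofNat Nat.Partrec.Code e) e).isSome = true}

/-- The characteristic function of the halting set. -/
noncomputable def chiHalt : ℕ → ℕ := Set.indicator haltingSet fun _ => 1

open Nat.Partrec (Code)
open Nat.Partrec.Code Denumerable

/-! ### Auxiliary machinery for the diagonalization -/

/-- Stage-`s` approximation to the function computed (in the limit) by code `e`: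
the value of `evaln` at the largest convergent input `(t, n)` with `t ≤ s`. -/
def Gfun (e s n : ℕ) : ℕ :=
  (List.range (s + 1)).foldl
    (fun acc t => (evaln s (ofNat Code e) (Nat.pair t n)).getD acc) 0

/-- The stage-`x` approximation of the `e`-th candidate set (column `e`). -/
def approxList (e x : ℕ) : List ℕ :=
  (List.range x).filter fun m => Gfun e x (Nat.pair e m) == 1

/-- First element of `A` whose color (looked up in `l`) is `d`, defaulting to `x`. -/
def firstOcc (x : ℕ) (A l : List ℕ) (d : ℕ) : ℕ :=
  ((A.filter fun m => l.getD m 0 == d).head?).getD x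

/-- One step of the diagonalizing coloring: given previous colors `l` of `0..x-1`,
choose a color `< k` whose first occurrence in the current approximation is as late
as possible. -/
def stepF (k e x : ℕ) (l : List ℕ) : ℕ :=
  (((List.range k).map fun d => (firstOcc x (approxList e x) l d, d)).foldl
    (fun r q => if r.1 < q.1 then q else r)
    (firstOcc x (approxList e x) l 0, 0)).2

/-- List of colors of `0, …, x-1` for the `e`-th diagonalizing coloring. -/
def colList (k e : ℕ) : ℕ → List ℕ
  | 0 => []
  | x + 1 => colList k e x ++ [stepF k e x (colList k e x)]

/-- The diagonalizing sequence of colorings. -/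
def fDiag (k e x : ℕ) : ℕ := stepF k e x (colList k e x)

/-! ### Elementary list lemmas -/

lemma filterAsFilterMap {α : Type*} (p : α → Bool) (l : List α) :
    l.filter p = l.filterMap fun a => bif p a then some a else none := by
  induction l with
  | nil => rfl
  | cons a l ih => cases h : p a <;> simp [List.filter_cons, List.filterMap_cons, h, ih]

lemma selMax_mem (L : List (ℕ × ℕ)) (p : ℕ × ℕ) :
    L.foldl (fun r q => if r.1 < q.1 then q else r) p = p ∨
    L.foldl (fun r q => if r.1 < q.1 then q else r) p ∈ L := by
  induction L generalizing p with
  | nil => exact Or.inl rfl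
  | cons q L ih =>
    rcases ih (if p.1 < q.1 then q else p) with h | h
    · rw [List.foldl_cons, h]
      split
      · exact Or.inr List.mem_cons_self
      · exact Or.inl rfl
    · rw [List.foldl_cons]
      exact Or.inr (List.mem_cons_of_mem _ h)

lemma selMax_ge_init (L : List (ℕ × ℕ)) (p : ℕ × ℕ) :
    p.1 ≤ (L.foldl (fun r q => if r.1 < q.1 then q else r) p).1 := by
  induction L generalizing p with
  | nil => exact le_rfl
  | cons q L ih =>
    rw [List.foldl_cons]
    refine le_trans ?_ (ih _)
    split
    · exact le_of_lt (by assumption)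
    · exact le_rfl

lemma selMax_ge (L : List (ℕ × ℕ)) (p : ℕ × ℕ) :
    ∀ q ∈ L, q.1 ≤ (L.foldl (fun r q => if r.1 < q.1 then q else r) p).1 := by
  induction L generalizing p with
  | nil => intro q h; cases h
  | cons q L ih =>
    intro r hr
    rcases List.mem_cons.1 hr with rfl | h
    · rw [List.foldl_cons]
      refine le_trans ?_ (selMax_ge_init _ _)
      split
      · exact le_rfl
      · exact le_of_not_gt (by assumption)
    · rw [List.foldl_cons]
      exact ih _ r h

lemma head_getD_le {L : List ℕ} (hL : L.Pairwise (· < ·)) {m : ℕ} (hm : m ∈ L) (x : ℕ) :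
    L.head?.getD x ≤ m := by
  cases L with
  | nil => cases hm
  | cons a L =>
    rcases List.mem_cons.1 hm with rfl | h
    · exact le_rfl
    · exact le_of_lt ((List.pairwise_cons.1 hL).1 _ h)

lemma head_getD_cases {L : List ℕ} (x : ℕ) {P : ℕ → Prop} (hx : P x)
    (hmem : ∀ m ∈ L, P m) : P (L.head?.getD x) := by
  cases L with
  | nil => exact hx
  | cons a L => exact hmem a List.mem_cons_self

/-! ### Properties of the construction -/

lemma mem_approxList {e x m : ℕ} :
    m ∈ approxList e x ↔ m < x ∧ Gfun e x (Nat.pair e m) = 1 := by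
  simp [approxList, List.mem_filter, List.mem_range]

lemma approxList_sorted (e x : ℕ) : (approxList e x).Pairwise (· < ·) :=
  List.Pairwise.sublist List.filter_sublist (List.pairwise_lt_range (n := x))

lemma stepF_spec (k e x : ℕ) (l : List ℕ) (hk : 0 < k) :
    stepF k e x l < k ∧ ∀ d, d < k →
      firstOcc x (approxList e x) l d ≤ firstOcc x (approxList e x) l (stepF k e x l) := by
  set A := approxList e x with hA
  set L := (List.range k).map fun d => (firstOcc x A l d, d) with hLdef
  set r := L.foldl (fun r q => if r.1 < q.1 then q else r) (firstOcc x A l 0, 0) with hr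
  have hstep : stepF k e x l = r.2 := rfl
  have hform : r = (firstOcc x A l r.2, r.2) ∧ r.2 < k := by
    rcases selMax_mem L (firstOcc x A l 0, 0) with h | h
    · rw [← hr] at h; rw [h]; exact ⟨rfl, hk⟩
    · rw [← hr] at h
      rw [hLdef] at h
      simp only [List.mem_map, List.mem_range] at h
      obtain ⟨d, hd, hdr⟩ := h
      constructor
      · rw [← hdr]
      · rw [← hdr]; exact hd
  constructor
  · rw [hstep]; exact hform.2
  · intro d hd
    have hmem : (firstOcc x A l d, d) ∈ L := by
      rw [hLdef]; exact List.mem_map.2 ⟨d, List.mem_range.2 hd, rfl⟩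
    have h2 := selMax_ge L (firstOcc x A l 0, 0) _ hmem
    rw [← hr] at h2
    have : r.1 = firstOcc x A l r.2 := by conv_lhs => rw [hform.1]
    rw [hstep, ← this]
    exact h2

lemma colList_eq (k e x : ℕ) : colList k e x = (List.range x).map (fDiag k e) := by
  induction x with
  | zero => rfl
  | succ x ih => simp [colList, List.range_succ, ih, fDiag]

lemma colList_getD (k e : ℕ) {m x : ℕ} (h : m < x) :
    (colList k e x).getD m 0 = fDiag k e m := by
  rw [colList_eq]
  have hlen : m < ((List.range x).map (fDiag k e)).length := by simpa using h
  rw [List.getD_eq_getElem _ _ hlen]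
  simp

lemma fDiag_lt (k e x : ℕ) (hk : 0 < k) : fDiag k e x < k :=
  (stepF_spec k e x (colList k e x) hk).1

/-! ### The stage lemma for `Gfun` -/

lemma foldl_stage (p : ℕ → Option ℕ) (v T : ℕ) (hT : (p T).isSome = true)
    (hval : ∀ t, T ≤ t → ∀ w, p t = some w → w = v) :
    ∀ s, T ≤ s → (List.range (s + 1)).foldl (fun acc t => (p t).getD acc) 0 = v := by
  intro s hs
  induction s, hs using Nat.le_induction with
  | base =>
    rw [List.range_succ, List.foldl_append]
    obtain ⟨w, hw⟩ := Option.isSome_iff_exists.1 hT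
    simp only [List.foldl_cons, List.foldl_nil, hw, Option.getD_some]
    exact hval T le_rfl w hw
  | succ s hs ih =>
    rw [List.range_succ, List.foldl_append]
    simp only [List.foldl_cons, List.foldl_nil]
    cases hps : p (s + 1) with
    | none => simpa [hps] using ih
    | some w =>
      simp only [Option.getD_some]
      exact hval (s + 1) (by omega) w hps

lemma Gfun_eq {e s n v T : ℕ} (hT : T ≤ s)
    (hsome : (evaln s (ofNat Code e) (Nat.pair T n)).isSome = true)
    (hval : ∀ t w, T ≤ t → evaln s (ofNat Code e) (Nat.pair t n) = some w → w = v) :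
    Gfun e s n = v :=
  foldl_stage (fun t => evaln s (ofNat Code e) (Nat.pair t n)) v T hsome
    (fun t ht w hw => hval t w ht hw) s hT

/-! ### The approximation to the halting-set oracle and to a candidate solution -/

/-- Stage-`s` approximation to `chiHalt`. -/
def chiApp (s m : ℕ) : ℕ := bif (evaln s (ofNat Code m) m).isSome then 1 else 0

lemma chiApp_lim (m : ℕ) : ∃ s₀, ∀ s, s₀ ≤ s → chiApp s m = chiHalt m := by
  by_cases h : m ∈ haltingSet
  · obtain ⟨s, hs⟩ := id h
    refine ⟨s, fun t ht => ?_⟩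
    obtain ⟨w, hw⟩ := Option.isSome_iff_exists.1 hs
    have hw' : evaln t (ofNat Code m) m = some w := evaln_mono ht hw
    have hsome : (evaln t (ofNat Code m) m).isSome = true := by simp [hw']
    simp [chiApp, hsome, chiHalt, Set.indicator_of_mem h]
  · refine ⟨0, fun t _ => ?_⟩
    have hnone : (evaln t (ofNat Code m) m).isSome = false := by
      rw [Bool.eq_false_iff]
      intro hsome
      exact h ⟨t, hsome⟩
    simp [chiApp, hnone, chiHalt, Set.indicator_of_notMem h]

/-- Stage-`s` approximation to the function computed by `Ξ` from the halting set. -/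
def Yapp (Ξ : TuringFunctional) (s n : ℕ) : ℕ :=
  (Ξ.approx ((List.range s).map (chiApp s)) n).getD 0

lemma Yapp_lim (Ξ : TuringFunctional) (Y : ℕ → ℕ) (hΞ : Ξ.evalsTo chiHalt Y) (n : ℕ) :
    ∃ T, ∀ t, T ≤ t → Yapp Ξ t n = Y n := by
  obtain ⟨m, hm⟩ := hΞ n
  choose S hS using chiApp_lim
  refine ⟨max m ((Finset.range m).sup S), fun t ht => ?_⟩
  have hmt : m ≤ t := le_trans (le_max_left _ _) ht
  have hagree : (List.range m).map (chiApp t) = (List.range m).map chiHalt := by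
    apply List.map_congr_left
    intro a ha
    exact hS a t (le_trans (le_trans (Finset.le_sup (Finset.mem_range.2 (List.mem_range.1 ha)))
      (le_max_right _ _)) ht)
  have hpre : (List.range m).map (chiApp t) <+: (List.range t).map (chiApp t) := by
    apply List.IsPrefix.map
    have : (List.range t).take m = List.range m := by
      rw [List.take_range]; congr 1; omega
    rw [← this]
    exact List.take_prefix _ _
  have := Ξ.mono hpre (by rw [hagree]; exact hm)
  simp [Yapp, this]

/-! ### Computability -/

open Primrec in
lemma Gfun_primrec : Primrec fun p : ℕ × ℕ × ℕ => Gfun p.1 p.2.1 p.2.2 := by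
  have hev : Primrec fun q : (ℕ × ℕ × ℕ) × ℕ × ℕ =>
      evaln q.1.2.1 (ofNat Code q.1.1) (Nat.pair q.2.2 q.1.2.2) :=
    primrec_evaln.comp (((fst.comp (snd.comp fst)).pair
        ((Primrec.ofNat Code).comp (fst.comp fst))).pair
      (Primrec₂.natPair.comp (snd.comp snd) (snd.comp (snd.comp fst))))
  have h : Primrec₂ fun (p : ℕ × ℕ × ℕ) (q : ℕ × ℕ) =>
      (evaln p.2.1 (ofNat Code p.1) (Nat.pair q.2 p.2.2)).getD q.1 :=
    (option_getD.comp hev (fst.comp snd)).to₂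
  exact (list_foldl (list_range.comp (succ.comp (fst.comp snd))) (const 0) h).of_eq
    fun p => rfl

open Primrec in
lemma stepF_primrec (k : ℕ) : Primrec fun p : ℕ × ℕ × List ℕ => stepF k p.1 p.2.1 p.2.2 := by
  have hA : Primrec fun p : ℕ × ℕ × List ℕ => approxList p.1 p.2.1 := by
    have hGv : Primrec fun q : (ℕ × ℕ × List ℕ) × ℕ => Gfun q.1.1 q.1.2.1 (Nat.pair q.1.1 q.2) :=
      Gfun_primrec.comp ((fst.comp fst).pair ((fst.comp (snd.comp fst)).pair
        (Primrec₂.natPair.comp (fst.comp fst) snd)))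
    have hg : Primrec₂ fun (p : ℕ × ℕ × List ℕ) (m : ℕ) =>
        bif Gfun p.1 p.2.1 (Nat.pair p.1 m) == 1 then some m else none :=
      (Primrec.cond (Primrec.beq.comp hGv (const 1)) (option_some.comp snd) (const none)).to₂
    exact (Primrec.listFilterMap (list_range.comp (fst.comp snd)) hg).of_eq fun p =>
      (filterAsFilterMap _ _).symm
  have hFO : Primrec₂ fun (p : ℕ × ℕ × List ℕ) (d : ℕ) =>
      firstOcc p.2.1 (approxList p.1 p.2.1) p.2.2 d := by
    have hfilter : Primrec fun q : (ℕ × ℕ × List ℕ) × ℕ =>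
        (approxList q.1.1 q.1.2.1).filter fun m => q.1.2.2.getD m 0 == q.2 := by
      have hgd : Primrec fun r : ((ℕ × ℕ × List ℕ) × ℕ) × ℕ => r.1.1.2.2.getD r.2 0 :=
        (list_getD 0).comp (snd.comp (snd.comp (fst.comp fst))) snd
      have hg : Primrec₂ fun (q : (ℕ × ℕ × List ℕ) × ℕ) (m : ℕ) =>
          bif q.1.2.2.getD m 0 == q.2 then some m else none :=
        (Primrec.cond (Primrec.beq.comp hgd (snd.comp fst))
          (option_some.comp snd) (const none)).to₂
      exact (Primrec.listFilterMap (hA.comp fst) hg).of_eq fun q =>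
        (filterAsFilterMap _ _).symm
    exact (option_getD.comp (list_head?.comp hfilter) (fst.comp (snd.comp fst))).to₂
  have hL : Primrec fun p : ℕ × ℕ × List ℕ =>
      (List.range k).map fun d => (firstOcc p.2.1 (approxList p.1 p.2.1) p.2.2 d, d) :=
    list_map (const (List.range k)) ((Primrec.pair hFO Primrec.snd).to₂)
  have hinit : Primrec fun p : ℕ × ℕ × List ℕ =>
      ((firstOcc p.2.1 (approxList p.1 p.2.1) p.2.2 0, 0) : ℕ × ℕ) :=
    Primrec.pair (hFO.comp Primrec.id (const 0)) (const 0)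
  have hh : Primrec₂ fun (_ : ℕ × ℕ × List ℕ) (rq : (ℕ × ℕ) × ℕ × ℕ) =>
      if rq.1.1 < rq.2.1 then rq.2 else rq.1 :=
    (Primrec.ite (nat_lt.comp (fst.comp (fst.comp snd)) (fst.comp (snd.comp snd)))
      (snd.comp snd) (fst.comp snd)).to₂
  exact (snd.comp (list_foldl hL hinit hh)).of_eq fun p => rfl

open Primrec in
lemma fDiag_primrec (k : ℕ) : Primrec₂ (fDiag k) := by
  have hcol : Primrec₂ (colList k) := by
    have hg : Primrec₂ fun (e : ℕ) (q : ℕ × List ℕ) => q.2 ++ [stepF k e q.1 q.2] :=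
      (list_append.comp (snd.comp snd)
        (list_cons.comp ((stepF_primrec k).comp
          (Primrec.pair fst (Primrec.pair (fst.comp snd) (snd.comp snd)))) (const []))).to₂
    have := Primrec.nat_rec (f := fun _ : ℕ => ([] : List ℕ)) (const ([] : List ℕ)) hg
    refine this.of_eq fun e x => ?_
    induction x with
    | zero => rfl
    | succ x ih => simp [colList, ih]
  have : Primrec fun p : ℕ × ℕ => stepF k p.1 p.2 (colList k p.1 p.2) :=
    (stepF_primrec k).comp (Primrec.pair fst (Primrec.pair snd (hcol.comp fst snd)))
  exact this.to₂

/-! ### Existence of an index approximating a `∅′`-computable function -/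

lemma exists_index (Ξ : TuringFunctional) (Y : ℕ → ℕ) (hΞ : Ξ.evalsTo chiHalt Y) :
    ∃ e : ℕ, ∀ n, ∃ S, ∀ s, S ≤ s → Gfun e s n = Y n := by
  have h1 : Primrec₂ chiApp := by
    have : Primrec fun p : ℕ × ℕ => (evaln p.1 (ofNat Code p.2) p.2).isSome :=
      Primrec.option_isSome.comp (primrec_evaln.comp
        ((Primrec.fst.pair ((Primrec.ofNat Code).comp Primrec.snd)).pair Primrec.snd))
    exact (Primrec.cond this (Primrec.const 1) (Primrec.const 0)).to₂
  have hu1 : Primrec fun q : ℕ => q.unpair.1 := Primrec.fst.comp Primrec.unpair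
  have hu2 : Primrec fun q : ℕ => q.unpair.2 := Primrec.snd.comp Primrec.unpair
  have hlist : Primrec fun q : ℕ => (List.range q.unpair.1).map (chiApp q.unpair.1) :=
    Primrec.list_map (Primrec.list_range.comp hu1)
      ((h1.comp (hu1.comp Primrec.fst) Primrec.snd).to₂)
  have happ : Computable fun q : ℕ =>
      Ξ.approx ((List.range q.unpair.1).map (chiApp q.unpair.1)) q.unpair.2 :=
    Ξ.computable.comp hlist.to_comp hu2.to_comp
  have h2 : Computable fun q : ℕ => Yapp Ξ q.unpair.1 q.unpair.2 :=
    Primrec.option_getD.to_comp.comp happ (Computable.const 0)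
  obtain ⟨c, hc⟩ := Nat.Partrec.Code.exists_code.1 (Partrec.nat_iff.1 h2.partrec)
  refine ⟨Encodable.encode c, fun n => ?_⟩
  obtain ⟨T, hT⟩ := Yapp_lim Ξ Y hΞ n
  have htot : Yapp Ξ T n ∈ eval c (Nat.pair T n) := by
    rw [hc]
    simp [Nat.unpair_pair]
  obtain ⟨s₁, hs₁⟩ := evaln_complete.1 htot
  refine ⟨s₁, fun s hs => ?_⟩
  have hofNat : ofNat Code (Encodable.encode c) = c := Denumerable.ofNat_encode c
  have hTb : T ≤ s := by
    have h3 := evaln_bound hs₁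
    have h4 := Nat.left_le_pair T n
    omega
  apply Gfun_eq (T := T) hTb
  · rw [hofNat]
    exact Option.isSome_iff_exists.2 ⟨_, evaln_mono hs hs₁⟩
  · intro t w ht hw
    rw [hofNat] at hw
    have hsound : w ∈ eval c (Nat.pair t n) := evaln_sound hw
    rw [hc] at hsound
    simp [Nat.unpair_pair] at hsound
    rw [hsound]
    exact hT t ht

/-! ### The main combinatorial lemma -/

lemma allColors (k : ℕ) (hk : 0 < k) (e : ℕ) (Y : ℕ → ℕ)
    (hG : ∀ n, ∃ S, ∀ s, S ≤ s → Gfun e s n = Y n)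
    (hinf : {m | Y (Nat.pair e m) = 1}.Infinite)
    {c : ℕ} (hc : c < k) : ∃ m, Y (Nat.pair e m) = 1 ∧ fDiag k e m = c := by
  by_contra hno
  push_neg at hno
  -- first witnesses of each used color in the true set
  have hW : ∀ d : ℕ, ∃ w : ℕ, (∃ m, Y (Nat.pair e m) = 1 ∧ fDiag k e m = d) →
      (Y (Nat.pair e w) = 1 ∧ fDiag k e w = d) := by
    intro d
    by_cases h : ∃ m, Y (Nat.pair e m) = 1 ∧ fDiag k e m = d
    · exact ⟨h.choose, fun _ => h.choose_spec⟩
    · exact ⟨0, fun hh => absurd hh h⟩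
  choose wit hwit using hW
  set M := (Finset.range k).sup wit with hM
  choose SY hSY using hG
  set s₀ := (Finset.range (M + 1)).sup fun m => SY (Nat.pair e m) with hs₀
  obtain ⟨x, hxD, hxgt⟩ := hinf.exists_gt (max s₀ M)
  have hxs₀ : s₀ ≤ x := le_trans (le_max_left _ _) (le_of_lt hxgt)
  have hxM : M < x := lt_of_le_of_lt (le_max_right _ _) hxgt
  -- the approximation is correct below M at stage x
  have hcorrect : ∀ m, m ≤ M → Gfun e x (Nat.pair e m) = Y (Nat.pair e m) := by
    intro m hm
    apply hSY
    exact le_trans (Finset.le_sup (f := fun m => SY (Nat.pair e m))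
      (Finset.mem_range.2 (by omega))) hxs₀
  have hmemA : ∀ m, m ≤ M → (m ∈ approxList e x ↔ Y (Nat.pair e m) = 1) := by
    intro m hm
    rw [mem_approxList, hcorrect m hm]
    exact ⟨fun h => h.2, fun h => ⟨by omega, h⟩⟩
  set l := colList k e x with hl
  set A := approxList e x with hA
  set F := firstOcc x A l with hF
  obtain ⟨hdlt, hdmax⟩ := stepF_spec k e x l hk
  set dstar := stepF k e x l with hds
  have hfx : fDiag k e x = dstar := rfl
  -- dstar is a used color
  have hused : Y (Nat.pair e (wit dstar)) = 1 ∧ fDiag k e (wit dstar) = dstar :=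
    hwit dstar ⟨x, hxD, hfx⟩
  have hwM : wit dstar ≤ M := Finset.le_sup (Finset.mem_range.2 hdlt)
  -- F dstar ≤ M
  have hFds : F dstar ≤ M := by
    have hgd : l.getD (wit dstar) 0 = fDiag k e (wit dstar) :=
      colList_getD k e (by omega)
    have hmem : wit dstar ∈ A.filter fun m => l.getD m 0 == dstar :=
      List.mem_filter.2 ⟨(hmemA _ hwM).2 hused.1, beq_iff_eq.mpr (hgd.trans hused.2)⟩
    have hsorted : (A.filter fun m => l.getD m 0 == dstar).Pairwise (· < ·) :=
      List.Pairwise.sublist List.filter_sublist (approxList_sorted e x)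
    exact le_trans (head_getD_le hsorted hmem x) hwM
  -- F c > M
  have hFc : M < F c := by
    rw [hF, firstOcc]
    apply head_getD_cases (P := fun z => M < z)
    · exact hxM
    · intro m hm
      rw [List.mem_filter] at hm
      by_contra hle
      push_neg at hle
      have hmD : Y (Nat.pair e m) = 1 := (hmemA m hle).1 hm.1
      have hmx : m < x := mem_approxList.1 hm.1 |>.1
      have : l.getD m 0 = fDiag k e m := colList_getD k e hmx
      rw [this] at hm
      exact hno m hmD (by simpa using hm.2)
  have := hdmax c hc
  rw [← hF] at this
  omega

/-! ### Main theorem -/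

theorem stmt18 (k : ℕ) (hk : 2 ≤ k) :
    ∃ f : ℕ → ℕ → ℕ, Computable₂ f ∧ (∀ i x, f i x < k) ∧
      ¬ ∃ Y : ℕ → ℕ, (∃ Ξ : TuringFunctional, Ξ.evalsTo chiHalt Y) ∧
        ∀ i, {x | Y (Nat.pair i x) = 1}.Infinite ∧
          ∃ c < k, ∀ x, Y (Nat.pair i x) = 1 → f i x ≠ c := by
  have hk0 : 0 < k := by omega
  refine ⟨fDiag k, (fDiag_primrec k).to_comp, fun i x => fDiag_lt k i x hk0, ?_⟩
  rintro ⟨Y, ⟨Ξ, hΞ⟩, hsol⟩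
  obtain ⟨e, hG⟩ := exists_index Ξ Y hΞ
  obtain ⟨hinf, c, hck, hthin⟩ := hsol e
  obtain ⟨m, hm, hfm⟩ := allColors k hk0 e Y hG hinf hck
  exact hthin m hm hfm
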